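/- For all integers m ≥ 1 and 1 ≤ k ≤ n, the following identity of rational numbers holds: ∑_{i=0}^{n-1} [(-1)^{1+i} ∏_{j=0}^{n-1}(j - k - i)] / [i! (n-1-i)! k] · ((k+i)!/i!)^m = (1/k!) ∑_{j=0}^{k-1} (-1)^{k+1-j} ((n+j)!/(n+j-k)!)^{m+1} · C(k-1, j), where the product ∏_{j=0}^{n-1}(j-k-i) is over integers j and C(a,b) denotes the binomial coefficient. -/

import Mathlib

private lemma neg_one_pow_mod (a b : ℕ) (h : a % 2 = b % 2) : ((-1:ℚ))^a = (-1)^b := by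
  conv_lhs => rw [← Nat.div_add_mod a 2]
  conv_rhs => rw [← Nat.div_add_mod b 2]
  rw [pow_add, pow_add, pow_mul, pow_mul]
  norm_num [h]

theorem stmt3 (m k n : ℕ) (hm : 1 ≤ m) (hk : 1 ≤ k) (hkn : k ≤ n) :
    ∑ i ∈ Finset.range n,
        ((-1 : ℚ) ^ (1 + i) * ∏ j ∈ Finset.range n, ((j : ℚ) - k - i)) /
          ((i.factorial : ℚ) * ((n - 1 - i).factorial : ℚ) * k) *
          (((k + i).factorial : ℚ) / (i.factorial : ℚ)) ^ m =
      (1 / (k.factorial : ℚ)) *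
        ∑ j ∈ Finset.range k,
          (-1 : ℚ) ^ (k + 1 - j) *
            (((n + j).factorial : ℚ) / ((n + j - k).factorial : ℚ)) ^ (m + 1) *
            ((k - 1).choose j : ℚ) := by
  rw [Finset.mul_sum, Finset.range_eq_Ico,
    ← Finset.sum_Ico_consecutive _ (Nat.zero_le (n - k)) (Nat.sub_le n k)]
  simp only [← Finset.range_eq_Ico]
  have hzero : ∑ i ∈ Finset.range (n - k),
      ((-1 : ℚ) ^ (1 + i) * ∏ j ∈ Finset.range n, ((j : ℚ) - k - i)) /
        ((i.factorial : ℚ) * ((n - 1 - i).factorial : ℚ) * k) *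
        (((k + i).factorial : ℚ) / (i.factorial : ℚ)) ^ m = 0 := by
    apply Finset.sum_eq_zero
    intro i hi
    simp only [Finset.mem_range] at hi
    have hmem : k + i ∈ Finset.range n := Finset.mem_range.mpr (by omega)
    rw [Finset.prod_eq_zero hmem (by push_cast; ring), mul_zero, zero_div, zero_mul]
  rw [hzero, zero_add, Finset.sum_Ico_eq_sum_range]
  rw [show n - (n - k) = k by omega]
  apply Finset.sum_congr rfl
  intro j hj
  rw [Finset.mem_range] at hj
  -- natural number simplifications
  have e1 : k + (n - k + j) = n + j := by omega
  have e2 : n - 1 - (n - k + j) = k - 1 - j := by omega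
  have e3 : n + j - k = n - k + j := by omega
  rw [e1, e2, e3]
  -- compute the product
  have hprod : ∏ t ∈ Finset.range n, ((t : ℚ) - k - ((n - k + j : ℕ) : ℚ)) =
      (-1 : ℚ) ^ n * ((n + j).descFactorial n : ℚ) := by
    rw [Nat.descFactorial_eq_prod_range, Nat.cast_prod,
      show ((-1 : ℚ)) ^ n = ∏ _t ∈ Finset.range n, (-1 : ℚ) by simp,
      ← Finset.prod_mul_distrib]
    apply Finset.prod_congr rfl
    intro t ht
    rw [Finset.mem_range] at ht
    have : ((n + j - t : ℕ) : ℚ) = (n : ℚ) + j - t := by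
      push_cast [Nat.cast_sub (by omega : t ≤ n + j)]; ring
    rw [this]
    push_cast [Nat.cast_sub hkn]
    ring
  rw [hprod]
  -- descFactorial in terms of factorials
  have hD : ((n + j).descFactorial n : ℚ) * (j.factorial : ℚ) = ((n + j).factorial : ℚ) := by
    have h := Nat.factorial_mul_descFactorial (show n ≤ n + j by omega)
    rw [show n + j - n = j by omega] at h
    rw [← Nat.cast_mul, mul_comm, h]
  have hj2 : (j.factorial : ℚ) ≠ 0 := Nat.cast_ne_zero.mpr j.factorial_ne_zero
  have hc2 : ((k - 1 - j).factorial : ℚ) ≠ 0 := Nat.cast_ne_zero.mpr (k - 1 - j).factorial_ne_zero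
  have hB2 : ((n - k + j).factorial : ℚ) ≠ 0 := Nat.cast_ne_zero.mpr (n - k + j).factorial_ne_zero
  have hk2 : (k : ℚ) ≠ 0 := Nat.cast_ne_zero.mpr (by omega)
  have hk1 : ((k - 1).factorial : ℚ) ≠ 0 := Nat.cast_ne_zero.mpr (k - 1).factorial_ne_zero
  have hD' : ((n + j).descFactorial n : ℚ) = ((n + j).factorial : ℚ) / (j.factorial : ℚ) := by
    rw [eq_div_iff hj2]; exact hD
  have hC : ((k - 1).choose j : ℚ) =
      ((k - 1).factorial : ℚ) / ((j.factorial : ℚ) * ((k - 1 - j).factorial : ℚ)) := by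
    rw [eq_div_iff (mul_ne_zero hj2 hc2)]
    have h := Nat.choose_mul_factorial_mul_factorial (show j ≤ k - 1 by omega)
    push_cast [← h]; ring
  have hkfac : (k.factorial : ℚ) = (k : ℚ) * ((k - 1).factorial : ℚ) := by
    have : k.factorial = k * (k - 1).factorial := by
      conv_lhs => rw [show k = k - 1 + 1 by omega]
      rw [Nat.factorial_succ, show k - 1 + 1 = k by omega]
    exact_mod_cast this
  have hsign : ((-1 : ℚ)) ^ (k + 1 - j) = (-1 : ℚ) ^ (1 + (n - k + j)) * (-1) ^ n := by
    rw [← pow_add]; exact neg_one_pow_mod _ _ (by omega)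
  rw [hD', hC, hkfac, hsign]
  field_simp
  rw [pow_succ, ← mul_assoc, mul_comm ((n - k + j).factorial : ℚ), mul_assoc, mul_div_cancel₀ _ hB2, mul_comm]
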